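/- Let K be an algebraically closed field of characteristic zero and let f ∈ K(x) be a rational function with complete partial fraction decomposition f = p + Σ_{k} Σ_{α} c_k(α)/(x-α)^k, where p ∈ K[x]. Then f is rationally summable if and only if for every k ∈ ℕ and every ℤ-orbit ω ⊆ K, the discrete residue dres(f,ω,k) := Σ_{α∈ω} c_k(α) equals zero, and additionally p is summable (which always holds for polynomials). -/

import Mathlib

open Polynomial

/-- The shift `f(x) ↦ f(x+1)` on rational functions. -/
noncomputable def shift {K : Type*} [Field K] (f : RatFunc K) : RatFunc K :=
  RatFunc.mk (f.num.comp (Polynomial.X + 1)) (f.denom.comp (Polynomial.X + 1))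

namespace Aux

open scoped nonZeroDivisors

variable {K : Type*} [Field K]

/-- substitution X ↦ X+1 as a ring hom -/
noncomputable def σ : Polynomial K →+* Polynomial K :=
  (Polynomial.aeval (Polynomial.X + 1 : Polynomial K)).toRingHom

lemma σ_apply (p : Polynomial K) : σ p = p.comp (Polynomial.X + 1) := by
  simp [σ, Polynomial.aeval_def, Polynomial.eval₂_eq_eval_map, Polynomial.comp,
    Polynomial.algebraMap_eq]

lemma σ_injective : Function.Injective (σ : Polynomial K →+* Polynomial K) := by
  intro a b h
  rw [σ_apply, σ_apply] at h
  have := congrArg (fun p => p.comp (Polynomial.X - 1 : Polynomial K)) h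
  simpa [Polynomial.comp_assoc, Polynomial.add_comp, Polynomial.X_comp, Polynomial.one_comp]
    using this

lemma σ_ne_zero {p : Polynomial K} (hp : p ≠ 0) : σ p ≠ 0 := by
  intro h; exact hp (σ_injective (by simpa using h))

lemma hσ : (Polynomial K)⁰ ≤ ((Polynomial K)⁰).comap (σ : Polynomial K →+* Polynomial K) := by
  intro x hx
  simp only [Submonoid.mem_comap]
  rw [mem_nonZeroDivisors_iff_ne_zero] at hx ⊢
  exact σ_ne_zero hx

/-- shift as a ring hom -/
noncomputable def Sh : RatFunc K →+* RatFunc K := RatFunc.mapRingHom σ hσ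

lemma Sh_apply_eq (x : RatFunc K) : Sh x = RatFunc.map σ hσ x :=
  congrFun (RatFunc.coe_mapRingHom_eq_coe_map σ hσ) x

lemma shift_eq (f : RatFunc K) : shift f = Sh f := by
  rw [shift, RatFunc.mk_eq_div]
  conv_rhs => rw [← RatFunc.num_div_denom f]
  rw [Sh_apply_eq, RatFunc.map_apply_div, σ_apply, σ_apply]

lemma shift_algebraMap (p : Polynomial K) :
    shift (algebraMap (Polynomial K) (RatFunc K) p) =
      algebraMap (Polynomial K) (RatFunc K) (p.comp (Polynomial.X + 1)) := by
  rw [shift_eq, ← σ_apply]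
  have : algebraMap (Polynomial K) (RatFunc K) p =
      algebraMap _ _ p / algebraMap (Polynomial K) (RatFunc K) 1 := by simp
  rw [this, Sh_apply_eq, RatFunc.map_apply_div]
  simp

end Aux
namespace Aux
variable {K : Type*} [Field K]

/-- basic partial fraction term -/
noncomputable def term (q : ℕ × K) (a : K) : RatFunc K :=
  RatFunc.C a / (RatFunc.X - RatFunc.C q.2) ^ q.1

lemma term_eq_div (q : ℕ × K) (a : K) :
    term q a = algebraMap (Polynomial K) (RatFunc K) (Polynomial.C a) /
      algebraMap (Polynomial K) (RatFunc K) ((Polynomial.X - Polynomial.C q.2) ^ q.1) := by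
  rw [term, map_pow, map_sub, RatFunc.algebraMap_C, RatFunc.algebraMap_X]
  rw [RatFunc.algebraMap_C]

lemma term_eq_zero_iff (q : ℕ × K) (a : K) : term q a = 0 ↔ a = 0 := by
  constructor
  · intro h
    rw [term, _root_.div_eq_zero_iff] at h
    rcases h with h | h
    · have : Function.Injective (RatFunc.C : K →+* RatFunc K) := RingHom.injective _
      simpa using this (h.trans (map_zero _).symm)
    · exfalso
      have hX : (RatFunc.X - RatFunc.C q.2 : RatFunc K) ≠ 0 := by
        rw [← RatFunc.algebraMap_X, ← RatFunc.algebraMap_C, ← map_sub]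
        exact RatFunc.algebraMap_ne_zero (Polynomial.X_sub_C_ne_zero _)
      exact pow_ne_zero _ hX h
  · intro h; simp [term, h]

lemma term_add (q : ℕ × K) (a b : K) : term q (a + b) = term q a + term q b := by
  rw [term, term, term, map_add, add_div]

lemma term_sub (q : ℕ × K) (a b : K) : term q (a - b) = term q a - term q b := by
  rw [term, term, term, map_sub, sub_div]

lemma term_smul (q : ℕ × K) (a b : K) : RatFunc.C a * term q b = term q (a * b) := by
  rw [term, term, map_mul, mul_div_assoc]

end Aux
namespace Aux
variable {K : Type*} [Field K]

lemma comp_X_add_one_sub_C (β : K) :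
    ((Polynomial.X - Polynomial.C β).comp (Polynomial.X + 1) : Polynomial K) =
      Polynomial.X - Polynomial.C (β - 1) := by
  simp [Polynomial.sub_comp]
  ring

/-- key: summability of polynomials, char zero -/
lemma poly_summable_aux [CharZero K] (n : ℕ) :
    ∀ p : Polynomial K, p.natDegree ≤ n → ∃ q : Polynomial K,
      q.comp (Polynomial.X + 1) - q = p := by
  induction n with
  | zero =>
    intro p hp
    refine ⟨Polynomial.C (p.coeff 0) * Polynomial.X, ?_⟩
    have := Polynomial.eq_C_of_natDegree_le_zero hp
    rw [this]
    simp [Polynomial.mul_comp]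
    ring
  | succ n ih =>
    intro p hp
    set a := p.coeff (n + 1) with ha
    set q₀ : Polynomial K := Polynomial.C (a / ((n : K) + 2)) * Polynomial.X ^ (n + 2) with hq₀
    set r : Polynomial K := p - (q₀.comp (Polynomial.X + 1) - q₀) with hr
    have hcoeff : ∀ m : ℕ, n < m → r.coeff m = 0 := by
      intro m hm
      have hn2 : ((n : K) + 2) ≠ 0 := by
        have : ((n + 2 : ℕ) : K) ≠ 0 := Nat.cast_ne_zero.mpr (by omega)
        push_cast at this; exact this
      have hΔ : (q₀.comp (Polynomial.X + 1) - q₀).coeff m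
          = a / ((n : K) + 2) * (((n+2).choose m : K) - if m = n + 2 then 1 else 0) := by
        rw [hq₀]
        simp [Polynomial.mul_comp, Polynomial.pow_comp, Polynomial.coeff_C_mul,
          Polynomial.coeff_X_add_one_pow, Polynomial.coeff_X_pow]
        split_ifs <;> ring
      rcases lt_trichotomy m (n + 2) with h1 | h1 | h1
      · have hm1 : m = n + 1 := by omega
        subst hm1
        rw [hr, Polynomial.coeff_sub, hΔ]
        have : ((n+2).choose (n+1) : K) = (n : K) + 2 := by
          rw [Nat.choose_succ_self_right]
          push_cast; ring
        rw [this]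
        simp [← ha]
        field_simp
        ring
      · subst h1
        rw [hr, Polynomial.coeff_sub, hΔ]
        have hp0 : p.coeff (n + 2) = 0 :=
          Polynomial.coeff_eq_zero_of_natDegree_lt (by omega)
        simp [hp0]
      · rw [hr, Polynomial.coeff_sub, hΔ]
        have hp0 : p.coeff m = 0 := Polynomial.coeff_eq_zero_of_natDegree_lt (by omega)
        have hc : (n+2).choose m = 0 := Nat.choose_eq_zero_of_lt h1
        have : m ≠ n + 2 := by omega
        simp [hp0, hc, this]
    have hrdeg : r.natDegree ≤ n := Polynomial.natDegree_le_iff_coeff_eq_zero.mpr hcoeff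
    obtain ⟨q₁, hq₁⟩ := ih r hrdeg
    refine ⟨q₁ + q₀, ?_⟩
    rw [Polynomial.add_comp]
    rw [hr] at hq₁
    ring_nf
    ring_nf at hq₁
    linear_combination hq₁

lemma poly_summable [CharZero K] (p : Polynomial K) :
    ∃ q : Polynomial K, q.comp (Polynomial.X + 1) - q = p :=
  poly_summable_aux p.natDegree p le_rfl

end Aux
namespace Aux
variable {ι κ M : Type*}

lemma finsum2_eq_sum [AddCommMonoid M] (F : ι → κ → M) (T : Finset (ι × κ))
    (hT : ∀ q : ι × κ, F q.1 q.2 ≠ 0 → q ∈ T) :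
    (∑ᶠ (k : ι) (α : κ), F k α) = ∑ q ∈ T, F q.1 q.2 := by
  classical
  have h1 : ∀ k : ι, (∑ᶠ α : κ, F k α) = ∑ α ∈ T.image Prod.snd, F k α := by
    intro k
    apply finsum_eq_sum_of_support_subset
    intro α hα
    simp only [Finset.coe_image, Set.mem_image]
    exact ⟨(k, α), hT _ hα, rfl⟩
  have h2 : (∑ᶠ k : ι, ∑ᶠ α : κ, F k α) =
      ∑ k ∈ T.image Prod.fst, ∑ᶠ α : κ, F k α := by
    apply finsum_eq_sum_of_support_subset
    intro k hk
    have : ∃ α, F k α ≠ 0 := by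
      by_contra hc
      push_neg at hc
      exact hk (by simpa [Function.support] using finsum_congr hc |>.trans finsum_zero)
    obtain ⟨α, hα⟩ := this
    simp only [Finset.coe_image, Set.mem_image]
    exact ⟨(k, α), hT _ hα, rfl⟩
  rw [h2]
  have h3 : ∑ k ∈ T.image Prod.fst, ∑ᶠ α : κ, F k α
      = ∑ k ∈ T.image Prod.fst, ∑ α ∈ T.image Prod.snd, F k α :=
    Finset.sum_congr rfl fun k _ => h1 k
  rw [h3, ← Finset.sum_product']
  refine (Finset.sum_subset ?_ ?_).symm
  · intro q hq
    simp only [Finset.mem_product, Finset.mem_image]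
    exact ⟨⟨q, hq, rfl⟩, ⟨q, hq, rfl⟩⟩
  · intro q _ hq
    by_contra hc
    exact hq (hT q hc)

lemma tele [AddCommGroup M] (h : ℤ → M) (hfin : (Function.support h).Finite) :
    (∑ᶠ n : ℤ, (h (n + 1) - h n)) = 0 := by
  have hfin' : (Function.support fun n : ℤ => h (n + 1)).Finite := by
    have : (Function.support fun n : ℤ => h (n + 1)) ⊆ (fun n : ℤ => n - 1) '' Function.support h := by
      intro n hn
      exact ⟨n + 1, hn, by ring⟩
    exact (hfin.image _).subset this
  rw [finsum_sub_distrib hfin' hfin]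
  have : (∑ᶠ n : ℤ, h (n + 1)) = ∑ᶠ n : ℤ, h n := by
    exact finsum_comp_equiv (Equiv.addRight (1 : ℤ))
  rw [this, sub_self]

end Aux
section UniqCore
open Polynomial
namespace Aux
variable {K : Type*} [Field K]

lemma sum_repr {ι : Type*} (α : K) (s : Finset ι) (u v : ι → Polynomial K)
    (hv : ∀ i ∈ s, (v i).eval α ≠ 0) :
    ∃ U V : Polynomial K, V.eval α ≠ 0 ∧
      (∑ i ∈ s, algebraMap (Polynomial K) (RatFunc K) (u i) / algebraMap _ _ (v i)) =
        algebraMap (Polynomial K) (RatFunc K) U / algebraMap _ _ V ∧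
      U.eval α / V.eval α = ∑ i ∈ s, (u i).eval α / (v i).eval α := by
  classical
  induction s using Finset.cons_induction with
  | empty => exact ⟨0, 1, by simp, by simp, by simp⟩
  | cons a s ha ih =>
    obtain ⟨U, V, hV, hsum, heval⟩ := ih (fun i hi => hv i (Finset.mem_cons_of_mem hi))
    have hva : (v a).eval α ≠ 0 := hv a (Finset.mem_cons_self a s)
    have hvane : v a ≠ 0 := fun h => hva (by simp [h])
    have hVne : V ≠ 0 := fun h => hV (by simp [h])
    refine ⟨u a * V + v a * U, v a * V, ?_, ?_, ?_⟩
    · rw [Polynomial.eval_mul]; exact mul_ne_zero hva hV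
    · rw [Finset.sum_cons, hsum,
        div_add_div _ _ (RatFunc.algebraMap_ne_zero hvane) (RatFunc.algebraMap_ne_zero hVne),
        ← map_mul, ← map_mul, ← map_mul, ← map_add]
    · rw [Finset.sum_cons, ← heval, div_add_div _ _ hva hV,
        Polynomial.eval_add, Polynomial.eval_mul, Polynomial.eval_mul, Polynomial.eval_mul]

lemma zero_decomp (T : Finset (ℕ × K)) (c : ℕ × K → K) (p : Polynomial K)
    (h1 : ∀ q ∈ T, 1 ≤ q.1)
    (heq : algebraMap (Polynomial K) (RatFunc K) p + ∑ q ∈ T, term q (c q) = 0) :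
    p = 0 ∧ ∀ q ∈ T, c q = 0 := by
  classical
  have key : ∀ q ∈ T, c q = 0 := by
    by_contra hc
    push_neg at hc
    obtain ⟨q₀, hq₀T, hq₀⟩ := hc
    set T' := T.filter (fun q => c q ≠ 0) with hT'
    have hq₀T' : q₀ ∈ T' := Finset.mem_filter.mpr ⟨hq₀T, hq₀⟩
    have heq' : algebraMap (Polynomial K) (RatFunc K) p + ∑ q ∈ T', term q (c q) = 0 := by
      rw [hT', Finset.sum_filter_of_ne]
      · exact heq
      · intro q hq hterm hc0
        exact hterm ((term_eq_zero_iff q (c q)).mpr hc0)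
    set α := q₀.2 with hα
    set s := T'.filter (fun q => q.2 = α) with hs
    have hs_ne : s.Nonempty := ⟨q₀, Finset.mem_filter.mpr ⟨hq₀T', rfl⟩⟩
    obtain ⟨qm, hqm_s, hqm⟩ := Finset.exists_mem_eq_sup' hs_ne Prod.fst
    set m := qm.1 with hm
    have hqmT' : qm ∈ T' := (Finset.mem_filter.mp hqm_s).1
    have hqm2 : qm.2 = α := (Finset.mem_filter.mp hqm_s).2
    have hqmc : c qm ≠ 0 := (Finset.mem_filter.mp hqmT').2
    have hmax : ∀ q ∈ T', q.2 = α → q.1 ≤ m := by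
      intro q hq h2
      have := Finset.le_sup' (s := s) Prod.fst (Finset.mem_filter.mpr ⟨hq, h2⟩)
      rwa [hqm] at this
    have hm1 : 1 ≤ m := h1 qm (Finset.mem_filter.mp hqmT').1
    set P : Polynomial K := (Polynomial.X - Polynomial.C α) ^ m with hP
    set u : ℕ × K → Polynomial K := fun q =>
      Polynomial.C (c q) *
        (if q.2 = α then (Polynomial.X - Polynomial.C α) ^ (m - q.1) else P) with hu
    set v : ℕ × K → Polynomial K := fun q =>
      if q.2 = α then 1 else (Polynomial.X - Polynomial.C q.2) ^ q.1 with hvdef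
    have hv : ∀ q ∈ T', (v q).eval α ≠ 0 := by
      intro q _
      by_cases h2 : q.2 = α
      · simp [hvdef, h2]
      · simp only [hvdef, if_neg h2, Polynomial.eval_pow, Polynomial.eval_sub,
          Polynomial.eval_X, Polynomial.eval_C]
        exact pow_ne_zero _ (sub_ne_zero.mpr (fun h => h2 h.symm))
    have hterm : ∀ q ∈ T', algebraMap (Polynomial K) (RatFunc K) P * term q (c q)
        = algebraMap (Polynomial K) (RatFunc K) (u q) / algebraMap _ _ (v q) := by
      intro q hq
      rw [term_eq_div]
      by_cases h2 : q.2 = α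
      · have hle : q.1 ≤ m := hmax q hq h2
        have hne : algebraMap (Polynomial K) (RatFunc K)
            ((Polynomial.X - Polynomial.C α) ^ q.1) ≠ 0 :=
          RatFunc.algebraMap_ne_zero (pow_ne_zero _ (Polynomial.X_sub_C_ne_zero _))
        have hsplit : P = (Polynomial.X - Polynomial.C α) ^ (m - q.1) *
            (Polynomial.X - Polynomial.C α) ^ q.1 := by
          rw [← pow_add, Nat.sub_add_cancel hle]
        simp only [hu, hvdef, h2, if_true, map_one, div_one]
        rw [← mul_div_assoc, ← map_mul, div_eq_iff hne, ← map_mul]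
        congr 1
        rw [hsplit]; ring
      · simp only [hu, hvdef]
        rw [if_neg h2, if_neg h2]
        rw [← mul_div_assoc, ← map_mul, mul_comm]
    obtain ⟨U, V, hV, hsum, heval⟩ := sum_repr α T' u v hv
    have heq2 : algebraMap (Polynomial K) (RatFunc K) (P * p) +
        algebraMap (Polynomial K) (RatFunc K) U / algebraMap _ _ V = 0 := by
      have h3 := congrArg (fun x => algebraMap (Polynomial K) (RatFunc K) P * x) heq'
      simp only [mul_add, Finset.mul_sum, mul_zero] at h3
      rw [Finset.sum_congr rfl hterm, hsum, ← map_mul] at h3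
      exact h3
    have hVne : algebraMap (Polynomial K) (RatFunc K) V ≠ 0 :=
      RatFunc.algebraMap_ne_zero (fun h => hV (by simp [h]))
    have hnum : P * p * V + U = 0 := by
      apply RatFunc.algebraMap_injective K
      have h4 := congrArg (fun x => x * algebraMap (Polynomial K) (RatFunc K) V) heq2
      simp only [add_mul, zero_mul, div_mul_cancel₀ _ hVne] at h4
      rw [map_add, map_mul, map_zero]
      exact h4
    have hUα : U.eval α = 0 := by
      have h5 := congrArg (Polynomial.eval α) hnum
      have hPα : P.eval α = 0 := by
        simp only [hP, Polynomial.eval_pow, Polynomial.eval_sub, Polynomial.eval_X,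
          Polynomial.eval_C, sub_self]
        exact zero_pow (Nat.one_le_iff_ne_zero.mp hm1)
      simpa [hPα] using h5
    have hsum_eval : (∑ i ∈ T', (u i).eval α / (v i).eval α) = c qm := by
      rw [Finset.sum_eq_single qm]
      · simp only [hu, hvdef]
        rw [if_pos hqm2, if_pos hqm2, hm, Nat.sub_self, pow_zero, mul_one]
        simp
      · intro q hq hne
        by_cases h2 : q.2 = α
        · have hlt : q.1 < m := by
            refine lt_of_le_of_ne (hmax q hq h2) (fun h => hne ?_)
            exact Prod.ext (h.trans hm.symm ▸ h) (h2.trans hqm2.symm)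
          have : (Polynomial.X - Polynomial.C α : Polynomial K).eval α = 0 := by simp
          simp only [hu, hvdef, if_pos h2, Polynomial.eval_mul, Polynomial.eval_pow, this,
            Polynomial.eval_C]
          rw [zero_pow (by omega : m - q.1 ≠ 0)]
          simp
        · have hPα : P.eval α = 0 := by
            simp only [hP, Polynomial.eval_pow, Polynomial.eval_sub, Polynomial.eval_X,
              Polynomial.eval_C, sub_self]
            exact zero_pow (Nat.one_le_iff_ne_zero.mp hm1)
          simp only [hu, hvdef]
          rw [if_neg h2, if_neg h2]
          simp [hPα]
      · intro h
        exact absurd hqmT' h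
    rw [hsum_eval, hUα, zero_div] at heval
    exact hqmc heval.symm
  refine ⟨?_, key⟩
  have hz : ∑ q ∈ T, term q (c q) = 0 :=
    Finset.sum_eq_zero (fun q hq => (term_eq_zero_iff _ _).mpr (key q hq))
  rw [hz, add_zero] at heq
  apply RatFunc.algebraMap_injective K
  rw [heq, map_zero]

end Aux
end UniqCore
section Uniq
open Polynomial
namespace Aux
variable {K : Type*} [Field K]

lemma finsum_term_eq_sum (c : ℕ × K → K) (T : Finset (ℕ × K))
    (h : ∀ q : ℕ × K, c q ≠ 0 → q ∈ T) :
    (∑ᶠ q : ℕ × K, term q (c q)) = ∑ q ∈ T, term q (c q) := by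
  apply finsum_eq_sum_of_support_subset
  intro q hq
  refine h q (fun h0 => ?_)
  rw [Function.mem_support] at hq
  exact hq ((term_eq_zero_iff q (c q)).mpr h0)

lemma uniq (p₁ p₂ : Polynomial K) (c₁ c₂ : ℕ × K → K)
    (h₁ : {q : ℕ × K | c₁ q ≠ 0}.Finite) (h₂ : {q : ℕ × K | c₂ q ≠ 0}.Finite)
    (o₁ : ∀ q : ℕ × K, c₁ q ≠ 0 → 1 ≤ q.1) (o₂ : ∀ q : ℕ × K, c₂ q ≠ 0 → 1 ≤ q.1)
    (heq : algebraMap (Polynomial K) (RatFunc K) p₁ + ∑ᶠ q : ℕ × K, term q (c₁ q)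
      = algebraMap (Polynomial K) (RatFunc K) p₂ + ∑ᶠ q : ℕ × K, term q (c₂ q)) :
    p₁ = p₂ ∧ c₁ = c₂ := by
  classical
  set T := (h₁.union h₂).toFinset with hT
  have hmem : ∀ q : ℕ × K, c₁ q ≠ 0 ∨ c₂ q ≠ 0 → q ∈ T := by
    intro q h
    rw [hT, Set.Finite.mem_toFinset]
    exact h
  have hnmem : ∀ q : ℕ × K, q ∉ T → c₁ q = 0 ∧ c₂ q = 0 := by
    intro q h
    rw [hT, Set.Finite.mem_toFinset, Set.mem_union, Set.mem_setOf_eq, Set.mem_setOf_eq,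
      not_or] at h
    simpa using h
  rw [finsum_term_eq_sum c₁ T (fun q h => hmem q (Or.inl h)),
    finsum_term_eq_sum c₂ T (fun q h => hmem q (Or.inr h))] at heq
  have heq2 : algebraMap (Polynomial K) (RatFunc K) (p₁ - p₂) +
      ∑ q ∈ T, term q (c₁ q - c₂ q) = 0 := by
    rw [map_sub]
    have : ∑ q ∈ T, term q (c₁ q - c₂ q) = ∑ q ∈ T, (term q (c₁ q) - term q (c₂ q)) :=
      Finset.sum_congr rfl fun q _ => term_sub q _ _
    rw [this, Finset.sum_sub_distrib]
    linear_combination heq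
  obtain ⟨hp, hc⟩ := zero_decomp T (fun q => c₁ q - c₂ q) (p₁ - p₂)
    (fun q hq => by
      rw [hT, Set.Finite.mem_toFinset, Set.mem_union, Set.mem_setOf_eq, Set.mem_setOf_eq] at hq
      rcases hq with hq | hq
      · exact o₁ q hq
      · exact o₂ q hq) heq2
  constructor
  · exact sub_eq_zero.mp hp
  · funext q
    rcases Decidable.em (q ∈ T) with h | h
    · exact sub_eq_zero.mp (hc q h)
    · obtain ⟨e1, e2⟩ := hnmem q h
      rw [e1, e2]

end Aux
end Uniq
section PFD
open Polynomial
namespace Aux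
variable {K : Type*} [Field K]

lemma finsum_term_zero : (∑ᶠ q : ℕ × K, term q 0) = 0 := by
  have : ∀ q : ℕ × K, term q 0 = 0 := fun q => by simp [term]
  rw [finsum_congr this, finsum_zero]

lemma pfd_const (u v : Polynomial K) (hv : v ≠ 0) (h0 : v.natDegree = 0) :
    algebraMap (Polynomial K) (RatFunc K) u / algebraMap _ _ v
      = algebraMap (Polynomial K) (RatFunc K) (Polynomial.C (v.coeff 0)⁻¹ * u) := by
  have hvC : v = Polynomial.C (v.coeff 0) := Polynomial.eq_C_of_natDegree_le_zero h0.le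
  have ha : v.coeff 0 ≠ 0 := fun h => hv (by rw [hvC, h, map_zero])
  rw [div_eq_iff (RatFunc.algebraMap_ne_zero hv), ← map_mul]
  congr 1
  nth_rewrite 2 [hvC]
  rw [mul_assoc, mul_comm u, ← mul_assoc, ← map_mul, inv_mul_cancel₀ ha]
  simp

lemma pfd_aux [IsAlgClosed K] (n : ℕ) : ∀ u v : Polynomial K, v ≠ 0 → v.natDegree ≤ n →
    ∃ (r : Polynomial K) (d : ℕ × K → K), {q : ℕ × K | d q ≠ 0}.Finite ∧
      (∀ q : ℕ × K, d q ≠ 0 → 1 ≤ q.1) ∧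
      algebraMap (Polynomial K) (RatFunc K) u / algebraMap _ _ v
        = algebraMap (Polynomial K) (RatFunc K) r + ∑ᶠ q : ℕ × K, term q (d q) := by
  classical
  induction n with
  | zero =>
    intro u v hv hdeg
    refine ⟨Polynomial.C (v.coeff 0)⁻¹ * u, 0, by simp, by simp, ?_⟩
    rw [pfd_const u v hv (Nat.le_zero.mp hdeg)]
    simp only [Pi.zero_apply, finsum_term_zero, add_zero]
  | succ n ih =>
    intro u v hv hdeg
    by_cases h0 : v.natDegree = 0
    · refine ⟨Polynomial.C (v.coeff 0)⁻¹ * u, 0, by simp, by simp, ?_⟩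
      rw [pfd_const u v hv h0]
      simp only [Pi.zero_apply, finsum_term_zero, add_zero]
    · have hdpos : 0 < v.degree := Polynomial.natDegree_pos_iff_degree_pos.mp
        (Nat.pos_of_ne_zero h0)
      obtain ⟨α, hroot⟩ := IsAlgClosed.exists_root v (ne_of_gt hdpos)
      set e := Polynomial.rootMultiplicity α v with hedef
      set w := v /ₘ (Polynomial.X - Polynomial.C α) ^ e with hwdef
      have hve : (Polynomial.X - Polynomial.C α) ^ e * w = v :=
        Polynomial.pow_mul_divByMonic_rootMultiplicity_eq v α
      have hw : w.eval α ≠ 0 :=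
        Polynomial.eval_divByMonic_pow_rootMultiplicity_ne_zero α hv
      have hw0 : w ≠ 0 := fun h => hw (by rw [h]; simp)
      have he : 0 < e := (Polynomial.rootMultiplicity_pos hv).mpr hroot
      set t := u.eval α / w.eval α with htdef
      set u₁ := u - Polynomial.C t * w with hu₁def
      have hu₁root : u₁.IsRoot α := by
        simp only [Polynomial.IsRoot, hu₁def, Polynomial.eval_sub, Polynomial.eval_mul,
          Polynomial.eval_C, htdef]
        field_simp
        ring
      obtain ⟨u₂, hu₂⟩ := (Polynomial.dvd_iff_isRoot).mpr hu₁root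
      set v' := (Polynomial.X - Polynomial.C α) ^ (e - 1) * w with hv'def
      have hXne : (Polynomial.X - Polynomial.C α : Polynomial K) ≠ 0 :=
        Polynomial.X_sub_C_ne_zero α
      have hv'0 : v' ≠ 0 := mul_ne_zero (pow_ne_zero _ hXne) hw0
      have hvv' : v = (Polynomial.X - Polynomial.C α) * v' := by
        rw [hv'def, ← mul_assoc, ← pow_succ', Nat.sub_add_cancel he, hve]
      have hdeg' : v'.natDegree ≤ n := by
        have h1 : v.natDegree = 1 + v'.natDegree := by
          rw [hvv', Polynomial.natDegree_mul hXne hv'0, Polynomial.natDegree_X_sub_C]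
        omega
      obtain ⟨r, d, hdfin, hord, hdecomp⟩ := ih u₂ v' hv'0 hdeg'
      have hkey : algebraMap (Polynomial K) (RatFunc K) u / algebraMap _ _ v
          = term (e, α) t + (algebraMap (Polynomial K) (RatFunc K) u₂ / algebraMap _ _ v') := by
        have hterm : term (e, α) t
            = algebraMap (Polynomial K) (RatFunc K) (Polynomial.C t * w) / algebraMap _ _ v := by
          rw [term_eq_div]
          rw [div_eq_div_iff (RatFunc.algebraMap_ne_zero (pow_ne_zero _ hXne))
            (RatFunc.algebraMap_ne_zero hv), ← map_mul, ← map_mul]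
          congr 1
          rw [← hve]; ring
        have h2 : algebraMap (Polynomial K) (RatFunc K) u₂ / algebraMap _ _ v'
            = algebraMap (Polynomial K) (RatFunc K) u₁ / algebraMap _ _ v := by
          rw [div_eq_div_iff (RatFunc.algebraMap_ne_zero hv'0) (RatFunc.algebraMap_ne_zero hv),
            ← map_mul, ← map_mul]
          congr 1
          rw [hu₂, hvv']; ring
        rw [hterm, h2, ← add_div, ← map_add]
        congr 1
        rw [hu₁def]; ring
      refine ⟨r, fun q => d q + (if q = (e, α) then t else 0), ?_, ?_, ?_⟩
      · apply Set.Finite.subset (hdfin.union (Set.finite_singleton (e, α)))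
        intro q hq
        simp only [Set.mem_setOf_eq] at hq
        rcases Decidable.em (q = (e, α)) with h | h
        · exact Or.inr h
        · rw [if_neg h, add_zero] at hq
          exact Or.inl hq
      · intro q hq
        have hq' : d q + (if q = (e, α) then t else 0) ≠ 0 := hq
        rcases Decidable.em (q = (e, α)) with h | h
        · subst h; exact he
        · rw [if_neg h, add_zero] at hq'
          exact hord q hq'
      · have hfin1 : (Function.support fun q : ℕ × K => term q (d q)).Finite := by
          apply hdfin.subset
          intro q hq
          rw [Function.mem_support] at hq
          exact fun h0 => hq ((term_eq_zero_iff _ _).mpr h0)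
        have hfin2 : (Function.support fun q : ℕ × K =>
            term q (if q = (e, α) then t else 0)).Finite := by
          apply (Set.finite_singleton (e, α)).subset
          intro q hq
          rw [Function.mem_support] at hq
          rcases Decidable.em (q = (e, α)) with h | h
          · exact h
          · exact absurd ((term_eq_zero_iff _ _).mpr (if_neg h)) hq
        have hsingle : (∑ᶠ q : ℕ × K, term q (if q = (e, α) then t else 0))
            = term (e, α) t := by
          rw [finsum_eq_single _ ((e, α) : ℕ × K)
            (fun q hq => by rw [if_neg hq]; simp [term]), if_pos rfl]
        have hsplit : (∑ᶠ q : ℕ × K, term q (d q + if q = (e, α) then t else 0))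
            = (∑ᶠ q : ℕ × K, term q (d q)) + term (e, α) t := by
          rw [finsum_congr (fun q : ℕ × K => term_add q (d q) _),
            finsum_add_distrib hfin1 hfin2, hsingle]
        rw [hkey, hdecomp, hsplit]
        ring

lemma exists_pfd [IsAlgClosed K] (g : RatFunc K) :
    ∃ (r : Polynomial K) (d : ℕ × K → K), {q : ℕ × K | d q ≠ 0}.Finite ∧
      (∀ q : ℕ × K, d q ≠ 0 → 1 ≤ q.1) ∧
      g = algebraMap (Polynomial K) (RatFunc K) r + ∑ᶠ q : ℕ × K, term q (d q) := by
  obtain ⟨r, d, h1, h2, h3⟩ := pfd_aux g.denom.natDegree g.num g.denom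
    (RatFunc.denom_ne_zero g) le_rfl
  exact ⟨r, d, h1, h2, by rw [← RatFunc.num_div_denom g, h3]⟩

end Aux
end PFD
section ShiftTerm
open Polynomial
namespace Aux
variable {K : Type*} [Field K]

lemma shift_zero : shift (0 : RatFunc K) = 0 := by rw [shift_eq, map_zero]

lemma shift_sub (x y : RatFunc K) : shift (x - y) = shift x - shift y := by
  rw [shift_eq, shift_eq, shift_eq, map_sub]

lemma shift_add (x y : RatFunc K) : shift (x + y) = shift x + shift y := by
  rw [shift_eq, shift_eq, shift_eq, map_add]

lemma shift_C (a : K) : shift (RatFunc.C a) = RatFunc.C a := by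
  rw [← RatFunc.algebraMap_C, shift_algebraMap, Polynomial.C_comp]

lemma shift_C_mul (a : K) (x : RatFunc K) :
    shift (RatFunc.C a * x) = RatFunc.C a * shift x := by
  rw [shift_eq, shift_eq, map_mul, ← shift_eq, shift_C]

lemma shift_term (k : ℕ) (γ : K) (a : K) :
    shift (term (k, γ) a) = term (k, γ - 1) a := by
  rw [term_eq_div, term_eq_div, shift_eq, Sh_apply_eq, RatFunc.map_apply_div, σ_apply, σ_apply,
    Polynomial.C_comp, Polynomial.pow_comp, comp_X_add_one_sub_C]

lemma shift_finsum {α : Type*} (F : α → RatFunc K) :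
    shift (∑ᶠ i, F i) = ∑ᶠ i, shift (F i) := by
  have hinj : Function.Injective (⇑(Sh (K := K)).toAddMonoidHom) := by
    intro a b hab
    have hab' : Sh a = Sh b := hab
    rw [Sh_apply_eq, Sh_apply_eq] at hab'
    exact RatFunc.map_injective σ hσ σ_injective hab'
  have h := AddMonoidHom.map_finsum_of_injective (Sh (K := K)).toAddMonoidHom hinj F
  rw [shift_eq]
  exact h.trans (finsum_congr fun i => (shift_eq (F i)).symm)

end Aux
end ShiftTerm
section Orbit
open Polynomial
namespace Aux
variable {K : Type*} [Field K]

lemma exists_tele [CharZero K] (k : ℕ) (β : K) (n : ℤ) :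
    ∃ h : RatFunc K, shift h - h = term (k, β + (n : K)) 1 - term (k, β) 1 := by
  induction n using Int.induction_on with
  | zero =>
    refine ⟨0, ?_⟩
    rw [shift_zero]
    have c0 : ((0 : ℤ) : K) = 0 := by push_cast; ring
    rw [c0, add_zero, sub_self, sub_self]
  | succ n ih =>
    obtain ⟨h, hh⟩ := ih
    have cast1 : (((n : ℤ)) : K) = (n : K) := by push_cast; ring
    have cast2 : ((((n : ℤ) + 1) : ℤ) : K) = (n : K) + 1 := by push_cast; ring
    rw [cast1] at hh
    rw [cast2]
    refine ⟨h - term (k, β + ((n : K) + 1)) 1, ?_⟩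
    rw [shift_sub, shift_term]
    have e1 : β + ((n : K) + 1) - 1 = β + (n : K) := by ring
    rw [e1]
    linear_combination hh
  | pred n ih =>
    obtain ⟨h, hh⟩ := ih
    have cast1 : ((-(n : ℤ) : ℤ) : K) = -(n : K) := by push_cast; ring
    have cast2 : ((-(n : ℤ) - 1 : ℤ) : K) = -(n : K) - 1 := by push_cast; ring
    rw [cast1] at hh
    rw [cast2]
    have e0 : -(n : K) - 1 = (-(n : K) - 1) := rfl
    refine ⟨h + term (k, β + -(n : K)) 1, ?_⟩
    rw [shift_add, shift_term]
    have e1 : β + -(n : K) - 1 = β + (-(n : K) - 1) := by ring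
    rw [e1]
    linear_combination hh

/-- the ℤ-translation equivalence relation -/
def intRel : Setoid K :=
  ⟨fun a b => ∃ n : ℤ, b = a + n,
    ⟨fun a => ⟨0, by push_cast; ring⟩,
     fun {a b} h => by
       obtain ⟨n, hn⟩ := h
       exact ⟨-n, by push_cast; rw [hn]; ring⟩,
     fun {a b c} h h' => by
       obtain ⟨n, hn⟩ := h
       obtain ⟨m, hm⟩ := h'
       exact ⟨n + m, by push_cast; rw [hm, hn]; ring⟩⟩⟩

/-- a choice of orbit representative -/
noncomputable def orb (a : K) : K := Quotient.out (Quotient.mk (intRel (K := K)) a)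

lemma orb_rel (a : K) : ∃ n : ℤ, a = orb a + (n : K) :=
  Quotient.exact (Quotient.out_eq (Quotient.mk (intRel (K := K)) a))

lemma orb_eq_of_rel {a b : K} (h : ∃ n : ℤ, b = a + (n : K)) : orb a = orb b :=
  congrArg Quotient.out (Quotient.sound (s := intRel (K := K)) h)

lemma orb_orb (a : K) : orb (orb a) = orb a :=
  orb_eq_of_rel (orb_rel a)

lemma rel_of_orb_eq {a b : K} (h : orb a = orb b) : ∃ n : ℤ, b = a + (n : K) := by
  obtain ⟨n1, e1⟩ := orb_rel a
  obtain ⟨n2, e2⟩ := orb_rel b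
  refine ⟨n2 - n1, ?_⟩
  have e1' : orb a = a - (n1 : K) := by linear_combination -e1
  rw [e2, ← h, e1']
  push_cast
  ring

end Aux
end Orbit
section MainAux
open Polynomial
namespace Aux
variable {K : Type*} [Field K]

lemma shift_finset_sum {α : Type*} (s : Finset α) (F : α → RatFunc K) :
    shift (∑ q ∈ s, F q) = ∑ q ∈ s, shift (F q) := by
  rw [shift_eq, map_sum]
  exact Finset.sum_congr rfl fun q _ => (shift_eq (F q)).symm

lemma term_finset_sum {α : Type*} (s : Finset α) (b : ℕ × K) (f : α → K) :
    (∑ q ∈ s, term b (f q)) = term b (∑ q ∈ s, f q) := by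
  classical
  induction s using Finset.cons_induction with
  | empty => simp [term]
  | cons a s ha ih => rw [Finset.sum_cons, Finset.sum_cons, ih, term_add]

end Aux
end MainAux


/-- A rational function `f` with complete partial fraction decomposition
`f = p + Σ_k Σ_α c_k(α)/(x-α)^k` is rationally summable if and only if all its
discrete residues `dres(f,ω,k) = Σ_{α∈ω} c_k(α)` vanish and `p` is summable. -/
theorem summable_iff_discrete_residues_zero {K : Type*} [Field K] [CharZero K] [IsAlgClosed K]
    (f : RatFunc K) (p : Polynomial K) (c : ℕ → K → K)
    (hfin : {q : ℕ × K | c q.1 q.2 ≠ 0}.Finite)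
    (hord : ∀ k α, c k α ≠ 0 → 1 ≤ k)
    (hf : f = algebraMap (Polynomial K) (RatFunc K) p +
      ∑ᶠ (k : ℕ) (α : K), RatFunc.C (c k α) / (RatFunc.X - RatFunc.C α) ^ k) :
    (∃ g : RatFunc K, f = shift g - g) ↔
      ((∀ k : ℕ, 1 ≤ k → ∀ α : K, (∑ᶠ n : ℤ, c k (α + (n : K))) = 0) ∧
        ∃ q : Polynomial K, algebraMap (Polynomial K) (RatFunc K) p =
          shift (algebraMap (Polynomial K) (RatFunc K) q) -
            algebraMap (Polynomial K) (RatFunc K) q) := by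
  classical
  set c' : ℕ × K → K := fun q => c q.1 q.2 with hc'def
  have hfin' : {q : ℕ × K | c' q ≠ 0}.Finite := hfin
  have hford : ∀ q : ℕ × K, c' q ≠ 0 → 1 ≤ q.1 := fun q h => hord q.1 q.2 h
  have hf' : f = algebraMap (Polynomial K) (RatFunc K) p +
      ∑ᶠ q : ℕ × K, Aux.term q (c' q) := by
    rw [hf]
    congr 1
    have h1 : (∑ᶠ (k : ℕ) (α : K), RatFunc.C (c k α) / (RatFunc.X - RatFunc.C α) ^ k)
        = ∑ q ∈ hfin.toFinset, Aux.term q (c' q) := by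
      refine Aux.finsum2_eq_sum (M := RatFunc K) (fun k α => Aux.term (k, α) (c k α))
        hfin.toFinset ?_
      intro q hq
      rw [Set.Finite.mem_toFinset]
      intro h0
      exact hq ((Aux.term_eq_zero_iff _ _).mpr h0)
    rw [h1, ← Aux.finsum_term_eq_sum c' hfin.toFinset
      (fun q h => (Set.Finite.mem_toFinset hfin).mpr h)]
  constructor
  · rintro ⟨g, hg⟩
    obtain ⟨r, d, hdfin, hdord, hgd⟩ := Aux.exists_pfd g
    have hsh : Function.Injective (fun q : ℕ × K => ((q.1, q.2 + 1) : ℕ × K)) := by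
      intro a b hab
      simp only [Prod.mk.injEq] at hab
      exact Prod.ext hab.1 (add_right_cancel hab.2)
    have hdfin2 : {q : ℕ × K | d (q.1, q.2 + 1) ≠ 0}.Finite := by
      have hpre : {q : ℕ × K | d (q.1, q.2 + 1) ≠ 0}
          = (fun q : ℕ × K => ((q.1, q.2 + 1) : ℕ × K)) ⁻¹' {q | d q ≠ 0} := rfl
      rw [hpre]
      exact Set.Finite.preimage (hsh.injOn) hdfin
    set e : ℕ × K → K := fun q => d (q.1, q.2 + 1) - d q with he_def
    have hefin : {q : ℕ × K | e q ≠ 0}.Finite := by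
      apply (hdfin2.union hdfin).subset
      intro q hq
      rw [Set.mem_setOf_eq] at hq
      by_contra hqc
      rw [Set.mem_union, Set.mem_setOf_eq, Set.mem_setOf_eq] at hqc
      push_neg at hqc
      exact hq (by rw [he_def]; simp [hqc.1, hqc.2])
    have heord : ∀ q : ℕ × K, e q ≠ 0 → 1 ≤ q.1 := by
      intro q hq
      by_cases h1 : d (q.1, q.2 + 1) ≠ 0
      · exact hdord (q.1, q.2 + 1) h1
      · push_neg at h1
        have h2 : d q ≠ 0 := fun h0 => hq (by rw [he_def]; simp [h1, h0])
        exact hdord q h2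
    have hfinA : (Function.support fun q : ℕ × K => Aux.term q (d (q.1, q.2 + 1))).Finite := by
      apply hdfin2.subset
      intro q hq
      rw [Function.mem_support] at hq
      exact fun h0 => hq ((Aux.term_eq_zero_iff _ _).mpr h0)
    have hfinB : (Function.support fun q : ℕ × K => Aux.term q (d q)).Finite := by
      apply hdfin.subset
      intro q hq
      rw [Function.mem_support] at hq
      exact fun h0 => hq ((Aux.term_eq_zero_iff _ _).mpr h0)
    have hcalc : shift g - g = algebraMap (Polynomial K) (RatFunc K)
        (r.comp (Polynomial.X + 1) - r) + ∑ᶠ q : ℕ × K, Aux.term q (e q) := by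
      rw [hgd, Aux.shift_add, Aux.shift_algebraMap, Aux.shift_finsum]
      have h4 : (∑ᶠ q : ℕ × K, shift (Aux.term q (d q)))
          = ∑ᶠ q : ℕ × K, Aux.term (q.1, q.2 - 1) (d q) :=
        finsum_congr fun q => Aux.shift_term q.1 q.2 (d q)
      have h5 : (∑ᶠ q : ℕ × K, Aux.term (q.1, q.2 - 1) (d q))
          = ∑ᶠ q : ℕ × K, Aux.term q (d (q.1, q.2 + 1)) := by
        have h5a := finsum_comp_equiv (M := RatFunc K)
          ((Equiv.refl ℕ).prodCongr (Equiv.addRight (1 : K)))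
          (f := fun q : ℕ × K => Aux.term (q.1, q.2 - 1) (d q))
        rw [← h5a]
        apply finsum_congr
        intro q
        show Aux.term (q.1, q.2 + 1 - 1) (d (q.1, q.2 + 1)) = Aux.term q (d (q.1, q.2 + 1))
        rw [add_sub_cancel_right]
      have h6 : (∑ᶠ q : ℕ × K, Aux.term q (e q))
          = (∑ᶠ q : ℕ × K, Aux.term q (d (q.1, q.2 + 1))) - ∑ᶠ q : ℕ × K, Aux.term q (d q) := by
        rw [← finsum_sub_distrib hfinA hfinB]
        exact finsum_congr fun q => Aux.term_sub q _ _
      rw [h4, h5, map_sub, h6]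
      ring
    obtain ⟨hp_eq, hce⟩ := Aux.uniq p (r.comp (Polynomial.X + 1) - r) c' e hfin' hefin
      hford heord (by rw [← hf', hg, hcalc])
    constructor
    · intro k hk α
      have hψ : Function.Injective (fun n : ℤ => ((k, α + (n : K)) : ℕ × K)) := by
        intro n m hnm
        simp only [Prod.mk.injEq] at hnm
        exact Int.cast_injective (add_left_cancel hnm.2)
      have hhfin : (Function.support fun n : ℤ => d (k, α + (n : K))).Finite := by
        have hpre : (Function.support fun n : ℤ => d (k, α + (n : K)))
            = (fun n : ℤ => ((k, α + (n : K)) : ℕ × K)) ⁻¹' {q | d q ≠ 0} := rfl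
        rw [hpre]
        exact Set.Finite.preimage (hψ.injOn) hdfin
      have htel := Aux.tele (fun n : ℤ => d (k, α + (n : K))) hhfin
      rw [← htel]
      apply finsum_congr
      intro n
      have h1 : c k (α + (n : K)) = e (k, α + (n : K)) := by
        rw [show c k (α + (n : K)) = c' (k, α + (n : K)) from rfl, hce]
      rw [h1, he_def]
      have h2 : α + (n : K) + 1 = α + ((n + 1 : ℤ) : K) := by push_cast; ring
      show d (k, α + (n : K) + 1) - d (k, α + (n : K))
          = d (k, α + ((n + 1 : ℤ) : K)) - d (k, α + (n : K))
      rw [h2]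
    · refine ⟨r, ?_⟩
      rw [hp_eq, map_sub, ← Aux.shift_algebraMap]
  · rintro ⟨hres, q₀, hq₀⟩
    set T := hfin.toFinset with hT
    have hrelsh : ∀ q : ℕ × K, ∃ h : RatFunc K,
        shift h - h = Aux.term q 1 - Aux.term (q.1, Aux.orb q.2) 1 := by
      intro q
      obtain ⟨n, hn⟩ := Aux.orb_rel q.2
      obtain ⟨h, hh⟩ := Aux.exists_tele q.1 (Aux.orb q.2) n
      refine ⟨h, ?_⟩
      rw [hh, ← hn]
    choose hfun hspec using hrelsh
    refine ⟨algebraMap (Polynomial K) (RatFunc K) q₀ +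
      ∑ q ∈ T, RatFunc.C (c' q) * hfun q, ?_⟩
    have hclaim : (∑ q ∈ T, Aux.term (q.1, Aux.orb q.2) (c' q)) = 0 := by
      set φ : ℕ × K → ℕ × K := fun q => (q.1, Aux.orb q.2) with hφ
      rw [← Finset.sum_fiberwise_of_maps_to (g := φ) (t := T.image φ)
        (fun x hx => Finset.mem_image_of_mem φ hx)]
      apply Finset.sum_eq_zero
      intro b hb
      obtain ⟨qb, hqbT, hqb_eq⟩ := Finset.mem_image.mp hb
      have hqbc : c' qb ≠ 0 := by
        rw [hT, Set.Finite.mem_toFinset] at hqbT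
        exact hqbT
      have hb1 : 1 ≤ b.1 := by
        rw [← hqb_eq]
        exact hford qb hqbc
      have hb2 : Aux.orb b.2 = b.2 := by
        rw [← hqb_eq]
        exact Aux.orb_orb qb.2
      have hinner : (∑ q ∈ T.filter (fun q => φ q = b), Aux.term (φ q) (c' q))
          = Aux.term b (∑ q ∈ T.filter (fun q => φ q = b), c' q) := by
        rw [← Aux.term_finset_sum]
        apply Finset.sum_congr rfl
        intro q hq
        rw [(Finset.mem_filter.mp hq).2]
      rw [hinner]
      have h0 : (∑ᶠ n : ℤ, c b.1 (b.2 + (n : K))) = 0 := hres b.1 hb1 b.2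
      have hψ : Function.Injective (fun n : ℤ => ((b.1, b.2 + (n : K)) : ℕ × K)) := by
        intro n m hnm
        simp only [Prod.mk.injEq] at hnm
        exact Int.cast_injective (add_left_cancel hnm.2)
      have hsupp : (Function.support fun n : ℤ => c b.1 (b.2 + (n : K))).Finite := by
        have hpre : (Function.support fun n : ℤ => c b.1 (b.2 + (n : K)))
            = (fun n : ℤ => ((b.1, b.2 + (n : K)) : ℕ × K)) ⁻¹' {q | c' q ≠ 0} := rfl
        rw [hpre]
        exact Set.Finite.preimage (hψ.injOn) hfin'
      have hsum_eq : (∑ q ∈ T.filter (fun q => φ q = b), c' q)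
          = ∑ᶠ n : ℤ, c b.1 (b.2 + (n : K)) := by
        rw [finsum_eq_sum _ hsupp]
        refine (Finset.sum_bij (s := hsupp.toFinset) (t := T.filter (fun q => φ q = b))
          (f := fun n : ℤ => c b.1 (b.2 + (n : K))) (g := c')
          (i := fun n _ => ((b.1, b.2 + (n : K)) : ℕ × K)) ?_ ?_ ?_ ?_).symm
        · intro n hn
          rw [Set.Finite.mem_toFinset, Function.mem_support] at hn
          refine Finset.mem_filter.mpr ⟨?_, ?_⟩
          · rw [hT, Set.Finite.mem_toFinset]
            exact hn
          · show φ (b.1, b.2 + (n : K)) = b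
            have horb : Aux.orb (b.2 + (n : K)) = b.2 :=
              ((Aux.orb_eq_of_rel ⟨n, rfl⟩).symm).trans hb2
            have hstep : φ (b.1, b.2 + (n : K)) = (b.1, Aux.orb (b.2 + (n : K))) := rfl
            rw [hstep, horb]
        · intro n hn m hm hnm
          exact hψ hnm
        · intro q hq
          obtain ⟨hqT, hqφ⟩ := Finset.mem_filter.mp hq
          have hq1 : q.1 = b.1 := by
            have h' := congrArg Prod.fst hqφ
            exact h'
          have hq2 : Aux.orb q.2 = b.2 := by
            have h' := congrArg Prod.snd hqφ
            exact h'
          have horbeq : Aux.orb b.2 = Aux.orb q.2 := by rw [hq2, hb2]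
          obtain ⟨n, hn⟩ := Aux.rel_of_orb_eq (a := b.2) (b := q.2) horbeq
          have hcc : c b.1 (b.2 + (n : K)) = c' q := by rw [← hq1, ← hn]
          refine ⟨n, ?_, ?_⟩
          · refine (Set.Finite.mem_toFinset hsupp).mpr ?_
            rw [Function.mem_support, hcc]
            rw [hT, Set.Finite.mem_toFinset] at hqT
            exact hqT
          · show ((b.1, b.2 + (n : K)) : ℕ × K) = q
            rw [← hn, ← hq1]
        · intro n hn
          rfl
      rw [hsum_eq, h0]
      simp [Aux.term]
    rw [hf', Aux.finsum_term_eq_sum c' T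
      (fun q h => by rw [hT, Set.Finite.mem_toFinset]; exact h)]
    rw [Aux.shift_add, Aux.shift_finset_sum]
    have hrw : (∑ q ∈ T, shift (RatFunc.C (c' q) * hfun q))
        = ∑ q ∈ T, RatFunc.C (c' q) * shift (hfun q) :=
      Finset.sum_congr rfl fun q _ => Aux.shift_C_mul _ _
    rw [hrw]
    have hre : shift (algebraMap (Polynomial K) (RatFunc K) q₀) +
        (∑ q ∈ T, RatFunc.C (c' q) * shift (hfun q)) -
        (algebraMap (Polynomial K) (RatFunc K) q₀ + ∑ q ∈ T, RatFunc.C (c' q) * hfun q)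
        = (shift (algebraMap (Polynomial K) (RatFunc K) q₀) -
            algebraMap (Polynomial K) (RatFunc K) q₀) +
          ∑ q ∈ T, (RatFunc.C (c' q) * shift (hfun q) - RatFunc.C (c' q) * hfun q) := by
      rw [Finset.sum_sub_distrib]
      ring
    rw [hre, ← hq₀]
    have hkey : ∀ q ∈ T, RatFunc.C (c' q) * shift (hfun q) - RatFunc.C (c' q) * hfun q
        = Aux.term q (c' q) - Aux.term (q.1, Aux.orb q.2) (c' q) := by
      intro q _
      rw [← mul_sub, hspec q, mul_sub, Aux.term_smul, Aux.term_smul, mul_one]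
    rw [Finset.sum_congr rfl hkey, Finset.sum_sub_distrib, hclaim, sub_zero]
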